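/- For non-negative integers m, n and −1 < τ < 1, the scaled Hermite polynomials satisfy the two-dimensional orthogonality relation ∫_ℝ ∫_ℝ e^{-x²/(1+τ)} e^{-y²/(1−τ)} C_m(x+iy) C_n(x−iy) dx dy = π m! √(1−τ²) δ_{m,n}. -/

import Mathlib

open MeasureTheory Complex


/-- The monic scaled Hermite polynomial `C_n(z) = (τ/2)^{n/2} H_n(z/√(2τ))`, interpreted
  through its explicit polynomial coefficients (which are polynomial in `τ`):
  `C_n(z) = Σ_{k ≤ n/2} (-1)^k n!/(k!(n-2k)!) (τ/2)^k z^{n-2k}`. -/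
noncomputable def C (τ : ℝ) (n : ℕ) (z : ℂ) : ℂ :=
  ∑ k ∈ Finset.range (n / 2 + 1),
    (-1 : ℂ) ^ k * (n.factorial : ℂ) / ((k.factorial : ℂ) * ((n - 2 * k).factorial : ℂ)) *
      ((τ : ℂ) / 2) ^ k * z ^ (n - 2 * k)

noncomputable def Ct (τ : ℝ) (n k : ℕ) (z : ℂ) : ℂ :=
  (-1 : ℂ) ^ k * (n.factorial : ℂ) / ((k.factorial : ℂ) * ((n - 2 * k).factorial : ℂ)) *
      ((τ : ℂ) / 2) ^ k * z ^ (n - 2 * k)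

lemma C_sum (τ : ℝ) (n : ℕ) (z : ℂ) : C τ n z = ∑ k ∈ Finset.range (n/2+1), Ct τ n k z := rfl

lemma Ct_zero (τ : ℝ) (n : ℕ) (z : ℂ) : Ct τ (n+2) 0 z = z * Ct τ (n+1) 0 z := by
  unfold Ct
  have h1 : ((n+1).factorial : ℂ) ≠ 0 := Nat.cast_ne_zero.2 (Nat.factorial_ne_zero _)
  have h2 : ((n+2).factorial : ℂ) ≠ 0 := Nat.cast_ne_zero.2 (Nat.factorial_ne_zero _)
  simp only [mul_zero, Nat.sub_zero, pow_zero, Nat.factorial_zero, Nat.cast_one, one_mul,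
    mul_one]
  rw [div_self h2, div_self h1, pow_succ]
  ring

lemma Ct_mid (τ : ℝ) (z : ℂ) (n i : ℕ) (h : 2*i+2 ≤ n+1) :
    Ct τ (n+2) (i+1) z = z * Ct τ (n+1) (i+1) z - ((n:ℂ)+1) * (τ:ℂ) * Ct τ n i z := by
  obtain ⟨j, rfl⟩ : ∃ j, n = 2*i+1+j := ⟨n-(2*i+1), by omega⟩
  unfold Ct
  rw [show 2*i+1+j+2 - 2*(i+1) = j+1 by omega, show 2*i+1+j+1 - 2*(i+1) = j by omega,
      show 2*i+1+j - 2*i = j+1 by omega]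
  have F2 : ((2*i+1+j+2).factorial : ℂ)
      = (2*(i:ℂ)+1+(j:ℂ)+2) * ((2*(i:ℂ)+1+(j:ℂ)+1) * ((2*i+1+j).factorial : ℂ)) := by
    rw [show (2*i+1+j+2) = ((2*i+1+j)+1)+1 from rfl, Nat.factorial_succ, Nat.factorial_succ]
    push_cast; ring
  have F1 : ((2*i+1+j+1).factorial : ℂ)
      = (2*(i:ℂ)+1+(j:ℂ)+1) * ((2*i+1+j).factorial : ℂ) := by
    rw [show (2*i+1+j+1) = ((2*i+1+j)+1) from rfl, Nat.factorial_succ]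
    push_cast; ring
  have Fi : ((i+1).factorial : ℂ) = ((i:ℂ)+1) * (i.factorial : ℂ) := by
    rw [Nat.factorial_succ]; push_cast; ring
  have Fj : ((j+1).factorial : ℂ) = ((j:ℂ)+1) * (j.factorial : ℂ) := by
    rw [Nat.factorial_succ]; push_cast; ring
  have hfi : (i.factorial : ℂ) ≠ 0 := Nat.cast_ne_zero.2 (Nat.factorial_ne_zero _)
  have hfj : (j.factorial : ℂ) ≠ 0 := Nat.cast_ne_zero.2 (Nat.factorial_ne_zero _)
  have hA : (((i+1).factorial) : ℂ) ≠ 0 := Nat.cast_ne_zero.2 (Nat.factorial_ne_zero _)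
  have hB : (((j+1).factorial) : ℂ) ≠ 0 := Nat.cast_ne_zero.2 (Nat.factorial_ne_zero _)
  field_simp
  rw [F2, F1, Fi, Fj]
  push_cast
  ring

lemma Ct_top (τ : ℝ) (z : ℂ) (q : ℕ) :
    Ct τ (2*q+2) (q+1) z = -(((2*q:ℕ):ℂ)+1) * (τ:ℂ) * Ct τ (2*q) q z := by
  unfold Ct
  rw [show 2*q+2 - 2*(q+1) = 0 by omega, show 2*q - 2*q = 0 by omega]
  have F2 : ((2*q+2).factorial : ℂ)
      = (2*(q:ℂ)+2) * ((2*(q:ℂ)+1) * ((2*q).factorial : ℂ)) := by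
    rw [show (2*q+2) = ((2*q)+1)+1 from rfl, Nat.factorial_succ, Nat.factorial_succ]
    push_cast; ring
  have Fq : ((q+1).factorial : ℂ) = ((q:ℂ)+1) * (q.factorial : ℂ) := by
    rw [Nat.factorial_succ]; push_cast; ring
  have hfq : (q.factorial : ℂ) ≠ 0 := Nat.cast_ne_zero.2 (Nat.factorial_ne_zero _)
  have hA : (((q+1).factorial) : ℂ) ≠ 0 := Nat.cast_ne_zero.2 (Nat.factorial_ne_zero _)
  simp only [Nat.factorial_zero, Nat.cast_one, pow_zero, mul_one]
  field_simp
  rw [F2, Fq]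
  push_cast
  ring

lemma C_succ_succ (τ : ℝ) (n : ℕ) (z : ℂ) :
    C τ (n+2) z = z * C τ (n+1) z - ((n:ℂ)+1) * (τ:ℂ) * C τ n z := by
  rcases Nat.even_or_odd n with ⟨q, hq⟩ | ⟨q, hq⟩
  · have hn : n = 2*q := by omega
    subst hn
    rw [C_sum, C_sum, C_sum,
      show (2*q+2)/2+1 = q+2 by omega, show (2*q+1)/2+1 = q+1 by omega,
      show (2*q)/2+1 = q+1 by omega]
    rw [Finset.sum_range_succ' (fun k => Ct τ (2*q+2) k z) (q+1),
      Finset.sum_range_succ (fun i => Ct τ (2*q+2) (i+1) z) q,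
      Finset.sum_range_succ' (fun k => Ct τ (2*q+1) k z) q,
      Finset.sum_range_succ (fun k => Ct τ (2*q) k z) q]
    have hmid : ∑ i ∈ Finset.range q, Ct τ (2*q+2) (i+1) z
        = ∑ i ∈ Finset.range q, (z * Ct τ (2*q+1) (i+1) z
            - (((2*q:ℕ):ℂ)+1) * (τ:ℂ) * Ct τ (2*q) i z) :=
      Finset.sum_congr rfl fun i hi => Ct_mid τ z (2*q) i (by
        have := Finset.mem_range.1 hi; omega)
    rw [hmid, Finset.sum_sub_distrib, Ct_top τ z q, Ct_zero τ (2*q) z]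
    simp only [mul_add, Finset.mul_sum]
    ring
  · have hn : n = 2*q+1 := by omega
    subst hn
    rw [C_sum, C_sum, C_sum,
      show (2*q+1+2)/2+1 = q+2 by omega, show (2*q+1+1)/2+1 = q+2 by omega,
      show (2*q+1)/2+1 = q+1 by omega]
    rw [Finset.sum_range_succ' (fun k => Ct τ (2*q+1+2) k z) (q+1),
      Finset.sum_range_succ' (fun k => Ct τ (2*q+1+1) k z) (q+1)]
    have hmid : ∑ i ∈ Finset.range (q+1), Ct τ (2*q+1+2) (i+1) z
        = ∑ i ∈ Finset.range (q+1), (z * Ct τ (2*q+1+1) (i+1) z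
            - (((2*q+1:ℕ):ℂ)+1) * (τ:ℂ) * Ct τ (2*q+1) i z) :=
      Finset.sum_congr rfl fun i hi => Ct_mid τ z (2*q+1) i (by
        have := Finset.mem_range.1 hi; omega)
    rw [hmid, Finset.sum_sub_distrib, Ct_zero τ (2*q+1) z]
    simp only [mul_add, Finset.mul_sum]
    ring


noncomputable def D (τ : ℝ) : ℕ → ℂ → ℂ
  | 0 => fun _ => 1
  | 1 => fun z => z
  | (n+2) => fun z => z * D τ (n+1) z - ((n:ℂ)+1) * (τ:ℂ) * D τ n z

@[simp] lemma D_zero (τ : ℝ) (z : ℂ) : D τ 0 z = 1 := rfl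
@[simp] lemma D_one (τ : ℝ) (z : ℂ) : D τ 1 z = z := rfl
lemma D_two (τ : ℝ) (n : ℕ) (z : ℂ) :
    D τ (n+2) z = z * D τ (n+1) z - ((n:ℂ)+1) * (τ:ℂ) * D τ n z := rfl

lemma D_rec (τ : ℝ) (n : ℕ) (z : ℂ) :
    z * D τ n z = D τ (n+1) z + (n:ℂ) * (τ:ℂ) * D τ (n-1) z := by
  cases n with
  | zero => simp
  | succ n => rw [D_two]; push_cast; ring

lemma D_hasDerivAt (τ : ℝ) (n : ℕ) (z : ℂ) :
    HasDerivAt (fun w => D τ n w) ((n:ℂ) * D τ (n-1) z) z := by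
  induction n using Nat.strong_induction_on generalizing z with
  | _ n ih =>
    match n with
    | 0 => simpa using hasDerivAt_const z (1:ℂ)
    | 1 => simpa using hasDerivAt_id' z
    | (n+2) =>
      have h1 := ih (n+1) (by omega) z
      have h0 := ih n (by omega) z
      have key := ((hasDerivAt_id z).mul h1).sub (h0.const_mul (((n:ℂ)+1) * (τ:ℂ)))
      have hfun : (fun w => D τ (n+2) w) = fun w => w * D τ (n+1) w - ((n:ℂ)+1) * (τ:ℂ) * D τ n w :=
        funext fun w => D_two τ n w
      rw [hfun]
      refine key.congr_deriv ?_
      have hrec := D_rec τ n z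
      simp only [id_eq, Nat.add_sub_cancel] at *
      push_cast
      linear_combination ((n:ℂ)+1) * hrec

lemma D_continuous (τ : ℝ) (n : ℕ) : Continuous (fun z => D τ n z) :=
  continuous_iff_continuousAt.2 fun z => (D_hasDerivAt τ n z).differentiableAt.continuousAt

lemma D_bound (τ : ℝ) (n : ℕ) : ∃ K : ℝ, 0 ≤ K ∧ ∀ z : ℂ, ‖D τ n z‖ ≤ K * (1 + ‖z‖) ^ n := by
  induction n using Nat.strong_induction_on with
  | _ n ih =>
    match n with
    | 0 => exact ⟨1, zero_le_one, fun z => by simp⟩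
    | 1 => exact ⟨1, zero_le_one, fun z => by simpa using le_add_of_nonneg_left zero_le_one⟩
    | (n+2) =>
      obtain ⟨K1, hK1, hb1⟩ := ih (n+1) (by omega)
      obtain ⟨K0, hK0, hb0⟩ := ih n (by omega)
      refine ⟨K1 + ((n:ℝ)+1) * |τ| * K0, by positivity, fun z => ?_⟩
      have ht : (1:ℝ) ≤ 1 + ‖z‖ := le_add_of_nonneg_right (norm_nonneg z)
      have hz : ‖z‖ ≤ 1 + ‖z‖ := le_add_of_nonneg_left zero_le_one
      have h1 := hb1 z
      have h0 := hb0 z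
      rw [D_two]
      calc ‖z * D τ (n+1) z - ((n:ℂ)+1) * (τ:ℂ) * D τ n z‖
          ≤ ‖z * D τ (n+1) z‖ + ‖((n:ℂ)+1) * (τ:ℂ) * D τ n z‖ := norm_sub_le _ _
        _ = ‖z‖ * ‖D τ (n+1) z‖ + (((n:ℝ)+1) * |τ|) * ‖D τ n z‖ := by
            have hc : ‖((n:ℂ)+1)*(τ:ℂ)‖ = ((n:ℝ)+1) * |τ| := by
              rw [norm_mul, Complex.norm_real, Real.norm_eq_abs]
              congr 1
              have : ((n:ℂ)+1) = ((n+1:ℕ):ℂ) := by push_cast; ring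
              rw [this, Complex.norm_natCast]; push_cast; ring
            rw [norm_mul, norm_mul, hc]
        _ ≤ (1+‖z‖) * (K1 * (1+‖z‖)^(n+1)) + (((n:ℝ)+1) * |τ|) * (K0 * (1+‖z‖)^n) := by
            gcongr <;> positivity
        _ ≤ (K1 + ((n:ℝ)+1) * |τ| * K0) * (1 + ‖z‖) ^ (n+2) := by
            have hpow : (1+‖z‖)^n ≤ (1+‖z‖)^(n+2) := pow_le_pow_right₀ ht (by omega)
            have e1 : (1+‖z‖) * (K1 * (1+‖z‖)^(n+1)) = K1 * (1+‖z‖)^(n+2) := by ring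
            have h2 : (((n:ℝ)+1) * |τ|) * (K0 * (1+‖z‖)^n)
                ≤ (((n:ℝ)+1) * |τ| * K0) * (1+‖z‖)^(n+2) := by
              rw [← mul_assoc]
              exact mul_le_mul_of_nonneg_left hpow (by positivity)
            rw [add_mul]
            linarith


lemma integrable_abs_pow_gauss {b : ℝ} (hb : 0 < b) (k : ℕ) :
    Integrable (fun x : ℝ => |x| ^ k * Real.exp (-b * x ^ 2)) := by
  have h := integrable_rpow_mul_exp_neg_mul_sq hb (s := (k:ℝ)) (by exact lt_of_lt_of_le neg_one_lt_zero (Nat.cast_nonneg k))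
  simp only [Real.rpow_natCast] at h
  have h2 := h.norm
  simpa [abs_mul, _root_.abs_pow, Real.abs_exp] using h2

lemma integrable_one_add_abs_pow_gauss {b : ℝ} (hb : 0 < b) (N : ℕ) :
    Integrable (fun x : ℝ => (1 + |x|) ^ N * Real.exp (-x ^ 2 / b)) := by
  have hb' : 0 < 1/b := by positivity
  have he : ∀ x : ℝ, Real.exp (-x ^ 2 / b) = Real.exp (-(1/b) * x ^ 2) := by
    intro x; congr 1; field_simp
  have heq : (fun x : ℝ => (1 + |x|) ^ N * Real.exp (-x ^ 2 / b))
      = fun x => ∑ k ∈ Finset.range (N+1),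
          (N.choose k : ℝ) * (|x| ^ (N-k) * Real.exp (-(1/b) * x ^ 2)) := by
    funext x
    rw [he, add_pow, Finset.sum_mul]
    refine Finset.sum_congr rfl fun k hk => by ring
  rw [heq]
  exact integrable_finset_sum _ fun k _ => (integrable_abs_pow_gauss hb' (N-k)).const_mul _

lemma integrable_poly_gauss {b : ℝ} (hb : 0 < b) {g : ℝ → ℂ} (hg : Continuous g)
    {K : ℝ} {N : ℕ} (hK : ∀ x, ‖g x‖ ≤ K * (1 + |x|) ^ N) :
    Integrable (fun x : ℝ => (Real.exp (-x ^ 2 / b) : ℂ) * g x) := by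
  have hmaj : Integrable (fun x : ℝ => K * ((1 + |x|) ^ N * Real.exp (-x ^ 2 / b))) :=
    (integrable_one_add_abs_pow_gauss hb N).const_mul K
  refine hmaj.mono' ?_ ?_
  · exact ((Complex.continuous_ofReal.comp (by continuity)).mul hg).aestronglyMeasurable
  · refine Filter.Eventually.of_forall fun x => ?_
    rw [norm_mul, Complex.norm_real, Real.norm_eq_abs, Real.abs_exp]
    calc Real.exp (-x^2/b) * ‖g x‖ ≤ Real.exp (-x^2/b) * (K * (1+|x|)^N) := by
          exact mul_le_mul_of_nonneg_left (hK x) (Real.exp_pos _).le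
      _ = K * ((1 + |x|) ^ N * Real.exp (-x ^ 2 / b)) := by ring

noncomputable def Wc (τ : ℝ) (p : ℝ × ℝ) : ℂ :=
  (Real.exp (-p.1 ^ 2 / (1 + τ)) * Real.exp (-p.2 ^ 2 / (1 - τ)) : ℂ)

lemma integrable_F2 {τ : ℝ} (hτ0 : -1 < τ) (hτ1 : τ < 1) {g : ℝ × ℝ → ℂ} (hg : Continuous g)
    {K : ℝ} {N : ℕ} (hK : ∀ p, ‖g p‖ ≤ K * (1 + |p.1|) ^ N * (1 + |p.2|) ^ N) :
    Integrable (fun p : ℝ × ℝ => Wc τ p * g p) := by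
  have h1 : (0:ℝ) < 1 + τ := by linarith
  have h2 : (0:ℝ) < 1 - τ := by linarith
  have hmaj : Integrable (fun p : ℝ × ℝ =>
      (K * ((1 + |p.1|) ^ N * Real.exp (-p.1 ^ 2 / (1+τ)))) *
        ((1 + |p.2|) ^ N * Real.exp (-p.2 ^ 2 / (1-τ)))) := by
    rw [Measure.volume_eq_prod]
    exact ((integrable_one_add_abs_pow_gauss h1 N).const_mul K).mul_prod
      (integrable_one_add_abs_pow_gauss h2 N)
  refine hmaj.mono' ?_ ?_
  · have hw : Continuous (Wc τ) := by
      unfold Wc; continuity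
    exact (hw.mul hg).aestronglyMeasurable
  · refine Filter.Eventually.of_forall fun p => ?_
    have hWnorm : ‖Wc τ p‖ = Real.exp (-p.1 ^ 2 / (1+τ)) * Real.exp (-p.2 ^ 2 / (1-τ)) := by
      unfold Wc
      rw [norm_mul, Complex.norm_real, Complex.norm_real, Real.norm_eq_abs, Real.norm_eq_abs,
        Real.abs_exp, Real.abs_exp]
    rw [norm_mul, hWnorm]
    calc Real.exp (-p.1^2/(1+τ)) * Real.exp (-p.2^2/(1-τ)) * ‖g p‖
        ≤ Real.exp (-p.1^2/(1+τ)) * Real.exp (-p.2^2/(1-τ))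
            * (K * (1 + |p.1|) ^ N * (1 + |p.2|) ^ N) := by
          exact mul_le_mul_of_nonneg_left (hK p) (by positivity)
      _ = (K * ((1 + |p.1|) ^ N * Real.exp (-p.1 ^ 2 / (1+τ)))) *
            ((1 + |p.2|) ^ N * Real.exp (-p.2 ^ 2 / (1-τ))) := by ring


noncomputable def Fz (τ : ℝ) (m n : ℕ) (p : ℝ × ℝ) : ℂ :=
  (Real.exp (-p.1 ^ 2 / (1 + τ)) : ℂ) * (Real.exp (-p.2 ^ 2 / (1 - τ)) : ℂ) *
    D τ m ((p.1 : ℂ) + (p.2 : ℂ) * I) * D τ n ((p.1 : ℂ) - (p.2 : ℂ) * I)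

noncomputable def J (τ : ℝ) (m n : ℕ) : ℂ := ∫ p : ℝ × ℝ, Fz τ m n p

lemma integrable_mono_Fz {τ : ℝ} (hτ0 : -1 < τ) (hτ1 : τ < 1) (a b m n : ℕ) :
    Integrable (fun p : ℝ × ℝ => (p.1:ℂ)^a * (p.2:ℂ)^b * Fz τ m n p) := by
  obtain ⟨Km, hKm0, hKm⟩ := D_bound τ m
  obtain ⟨Kn, hKn0, hKn⟩ := D_bound τ n
  have heq : (fun p : ℝ × ℝ => (p.1:ℂ)^a * (p.2:ℂ)^b * Fz τ m n p)
      = fun p => Wc τ p * ((p.1:ℂ)^a * (p.2:ℂ)^b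
          * D τ m ((p.1 : ℂ) + (p.2 : ℂ) * I) * D τ n ((p.1 : ℂ) - (p.2 : ℂ) * I)) := by
    funext p; simp only [Fz, Wc]; push_cast; ring
  rw [heq]
  have hcont : Continuous (fun p : ℝ × ℝ => (p.1:ℂ)^a * (p.2:ℂ)^b
      * D τ m ((p.1 : ℂ) + (p.2 : ℂ) * I) * D τ n ((p.1 : ℂ) - (p.2 : ℂ) * I)) := by
    have hu : Continuous (fun p : ℝ × ℝ => (p.1 : ℂ) + (p.2 : ℂ) * I) := by continuity
    have hv : Continuous (fun p : ℝ × ℝ => (p.1 : ℂ) - (p.2 : ℂ) * I) := by continuity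
    exact (((continuous_ofReal.comp continuous_fst).pow a).mul
      ((continuous_ofReal.comp continuous_snd).pow b)).mul
        ((D_continuous τ m).comp hu) |>.mul ((D_continuous τ n).comp hv)
  refine integrable_F2 hτ0 hτ1 hcont (K := Km * Kn) (N := a+b+m+n) fun p => ?_
  obtain ⟨x, y⟩ := p
  have hax : (0:ℝ) ≤ 1 + |x| := by positivity
  have hay : (0:ℝ) ≤ 1 + |y| := by positivity
  have h1x : (1:ℝ) ≤ 1 + |x| := by simp [abs_nonneg]
  have h1y : (1:ℝ) ≤ 1 + |y| := by simp [abs_nonneg]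
  have hu : 1 + ‖(x:ℂ) + (y:ℂ)*I‖ ≤ (1+|x|) * (1+|y|) := by
    have h1 : ‖(x:ℂ) + (y:ℂ)*I‖ ≤ |x| + |y| := by
      refine le_trans (norm_add_le _ _) ?_
      simp [Complex.norm_real, norm_mul, Complex.norm_I]
    nlinarith [abs_nonneg x, abs_nonneg y, mul_nonneg (abs_nonneg x) (abs_nonneg y)]
  have hv : 1 + ‖(x:ℂ) - (y:ℂ)*I‖ ≤ (1+|x|) * (1+|y|) := by
    have h1 : ‖(x:ℂ) - (y:ℂ)*I‖ ≤ |x| + |y| := by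
      refine le_trans (norm_sub_le _ _) ?_
      simp [Complex.norm_real, norm_mul, Complex.norm_I]
    nlinarith [abs_nonneg x, abs_nonneg y, mul_nonneg (abs_nonneg x) (abs_nonneg y)]
  have hDu : ‖D τ m ((x:ℂ) + (y:ℂ)*I)‖ ≤ Km * ((1+|x|) * (1+|y|))^m := by
    refine le_trans (hKm _) ?_
    exact mul_le_mul_of_nonneg_left (pow_le_pow_left₀ (by positivity) hu m) hKm0
  have hDv : ‖D τ n ((x:ℂ) - (y:ℂ)*I)‖ ≤ Kn * ((1+|x|) * (1+|y|))^n := by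
    refine le_trans (hKn _) ?_
    exact mul_le_mul_of_nonneg_left (pow_le_pow_left₀ (by positivity) hv n) hKn0
  calc ‖(x:ℂ)^a * (y:ℂ)^b * D τ m ((x:ℂ) + (y:ℂ)*I) * D τ n ((x:ℂ) - (y:ℂ)*I)‖
      = |x|^a * |y|^b * ‖D τ m ((x:ℂ) + (y:ℂ)*I)‖ * ‖D τ n ((x:ℂ) - (y:ℂ)*I)‖ := by
        simp [norm_mul, norm_pow, Complex.norm_real, Real.norm_eq_abs]
    _ ≤ (1+|x|)^a * (1+|y|)^b * (Km * ((1+|x|) * (1+|y|))^m) * (Kn * ((1+|x|) * (1+|y|))^n) := by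
        gcongr
        · exact le_add_of_nonneg_left zero_le_one
        · exact le_add_of_nonneg_left zero_le_one
    _ = (Km * Kn) * ((1+|x|)^(a+m+n) * (1+|y|)^(b+m+n)) := by
        rw [mul_pow, mul_pow]; ring
    _ ≤ (Km * Kn) * ((1+|x|)^(a+b+m+n) * (1+|y|)^(a+b+m+n)) := by
        have e1 : (1+|x|)^(a+m+n) ≤ (1+|x|)^(a+b+m+n) := pow_le_pow_right₀ h1x (by omega)
        have e2 : (1+|y|)^(b+m+n) ≤ (1+|y|)^(a+b+m+n) := pow_le_pow_right₀ h1y (by omega)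
        have := mul_le_mul e1 e2 (by positivity) (by positivity)
        exact mul_le_mul_of_nonneg_left this (by positivity)
    _ = Km * Kn * (1+|x|)^(a+b+m+n) * (1+|y|)^(a+b+m+n) := by ring

lemma integrable_Fz {τ : ℝ} (hτ0 : -1 < τ) (hτ1 : τ < 1) (m n : ℕ) :
    Integrable (Fz τ m n) := by
  have := integrable_mono_Fz hτ0 hτ1 0 0 m n
  simpa using this

lemma integrable_xFz {τ : ℝ} (hτ0 : -1 < τ) (hτ1 : τ < 1) (m n : ℕ) :
    Integrable (fun p : ℝ × ℝ => (p.1:ℂ) * Fz τ m n p) := by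
  have := integrable_mono_Fz hτ0 hτ1 1 0 m n
  simpa using this

lemma integrable_yFz {τ : ℝ} (hτ0 : -1 < τ) (hτ1 : τ < 1) (m n : ℕ) :
    Integrable (fun p : ℝ × ℝ => (p.2:ℂ) * Fz τ m n p) := by
  have := integrable_mono_Fz hτ0 hτ1 0 1 m n
  simpa using this

noncomputable def H1 (τ : ℝ) (m n : ℕ) (p : ℝ × ℝ) : ℂ :=
  (-2*(p.1:ℂ)) * Fz τ m n p + (1+(τ:ℂ))*(m:ℂ) * Fz τ (m-1) n p
    + (1+(τ:ℂ))*(n:ℂ) * Fz τ m (n-1) p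

noncomputable def H2 (τ : ℝ) (m n : ℕ) (p : ℝ × ℝ) : ℂ :=
  (-2*(p.2:ℂ)) * Fz τ m n p + (1-(τ:ℂ))*I*(m:ℂ) * Fz τ (m-1) n p
    - (1-(τ:ℂ))*I*(n:ℂ) * Fz τ m (n-1) p

lemma integrable_H1 {τ : ℝ} (hτ0 : -1 < τ) (hτ1 : τ < 1) (m n : ℕ) :
    Integrable (H1 τ m n) := by
  have heq : H1 τ m n = fun p => (-2) * ((p.1:ℂ) * Fz τ m n p)
      + ((1+(τ:ℂ))*(m:ℂ)) * Fz τ (m-1) n p + ((1+(τ:ℂ))*(n:ℂ)) * Fz τ m (n-1) p := by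
    funext p; simp only [H1]; ring
  rw [heq]
  exact (((integrable_xFz hτ0 hτ1 m n).const_mul _).add
    ((integrable_Fz hτ0 hτ1 (m-1) n).const_mul _)).add
      ((integrable_Fz hτ0 hτ1 m (n-1)).const_mul _)

lemma integrable_H2 {τ : ℝ} (hτ0 : -1 < τ) (hτ1 : τ < 1) (m n : ℕ) :
    Integrable (H2 τ m n) := by
  have heq : H2 τ m n = fun p => (-2) * ((p.2:ℂ) * Fz τ m n p)
      + ((1-(τ:ℂ))*I*(m:ℂ)) * Fz τ (m-1) n p - ((1-(τ:ℂ))*I*(n:ℂ)) * Fz τ m (n-1) p := by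
    funext p; simp only [H2]; ring
  rw [heq]
  exact (((integrable_yFz hτ0 hτ1 m n).const_mul _).add
    ((integrable_Fz hτ0 hτ1 (m-1) n).const_mul _)).sub
      ((integrable_Fz hτ0 hτ1 m (n-1)).const_mul _)

lemma hasDerivAt_Fz_x {τ : ℝ} (hτ0 : -1 < τ) (m n : ℕ) (y x : ℝ) :
    HasDerivAt (fun t : ℝ => (1+(τ:ℂ)) * Fz τ m n (t, y)) (H1 τ m n (x, y)) x := by
  have h1p : (0:ℝ) < 1 + τ := by linarith
  have h1ne : (1+τ:ℝ) ≠ 0 := ne_of_gt h1p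
  have h1c : (1+(τ:ℂ)) ≠ 0 := by
    have := Complex.ofReal_ne_zero.mpr h1ne; push_cast at this; exact this
  have hg : HasDerivAt (fun t : ℝ => Real.exp (-t^2/(1+τ)))
      (Real.exp (-x^2/(1+τ)) * (-(2*x)/(1+τ))) x := by
    have h := (((hasDerivAt_pow 2 x).neg).div_const (1+τ)).exp
    convert h using 1
    simp only [Pi.neg_apply]
    norm_num
  have hgc := hg.ofReal_comp
  have hDm : HasDerivAt (fun t : ℝ => D τ m ((t:ℂ) + (y:ℂ)*I))
      ((m:ℂ) * D τ (m-1) ((x:ℂ)+(y:ℂ)*I)) x := by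
    have h0 : HasDerivAt (fun w : ℂ => D τ m (w + (y:ℂ)*I))
        ((m:ℂ) * D τ (m-1) ((x:ℂ)+(y:ℂ)*I)) (x:ℂ) := by
      have := (D_hasDerivAt τ m ((x:ℂ)+(y:ℂ)*I)).comp (x:ℂ)
        ((hasDerivAt_id ((x:ℂ))).add_const ((y:ℂ)*I))
      simpa [Function.comp_def] using this
    exact h0.comp_ofReal
  have hDn : HasDerivAt (fun t : ℝ => D τ n ((t:ℂ) - (y:ℂ)*I))
      ((n:ℂ) * D τ (n-1) ((x:ℂ)-(y:ℂ)*I)) x := by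
    have h0 : HasDerivAt (fun w : ℂ => D τ n (w - (y:ℂ)*I))
        ((n:ℂ) * D τ (n-1) ((x:ℂ)-(y:ℂ)*I)) (x:ℂ) := by
      have := (D_hasDerivAt τ n ((x:ℂ)-(y:ℂ)*I)).comp (x:ℂ)
        ((hasDerivAt_id ((x:ℂ))).sub_const ((y:ℂ)*I))
      simpa [Function.comp_def] using this
    exact h0.comp_ofReal
  have hprod := (((hgc.mul_const ((Real.exp (-y^2/(1-τ)) : ℂ))).mul hDm).mul hDn).const_mul
    (1+(τ:ℂ))
  convert hprod using 1
  · rfl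
  all_goals first
  | (funext t; simp only [Fz, Pi.mul_apply])
  | (simp only [H1, Fz, Pi.mul_apply]; push_cast; field_simp [h1c])

lemma hasDerivAt_Fz_y {τ : ℝ} (hτ1 : τ < 1) (m n : ℕ) (x y : ℝ) :
    HasDerivAt (fun t : ℝ => (1-(τ:ℂ)) * Fz τ m n (x, t)) (H2 τ m n (x, y)) y := by
  have h1p : (0:ℝ) < 1 - τ := by linarith
  have h1ne : (1-τ:ℝ) ≠ 0 := ne_of_gt h1p
  have h1c : (1-(τ:ℂ)) ≠ 0 := by
    have := Complex.ofReal_ne_zero.mpr h1ne; push_cast at this; exact this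
  have hg : HasDerivAt (fun t : ℝ => Real.exp (-t^2/(1-τ)))
      (Real.exp (-y^2/(1-τ)) * (-(2*y)/(1-τ))) y := by
    have h := (((hasDerivAt_pow 2 y).neg).div_const (1-τ)).exp
    convert h using 1
    simp only [Pi.neg_apply]
    norm_num
  have hgc := hg.ofReal_comp
  have hDm : HasDerivAt (fun t : ℝ => D τ m ((x:ℂ) + (t:ℂ)*I))
      ((m:ℂ) * D τ (m-1) ((x:ℂ)+(y:ℂ)*I) * I) y := by
    have h0 : HasDerivAt (fun w : ℂ => D τ m ((x:ℂ) + w*I))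
        ((m:ℂ) * D τ (m-1) ((x:ℂ)+(y:ℂ)*I) * I) ((y:ℂ)) := by
      have hi : HasDerivAt (fun w : ℂ => (x:ℂ) + w*I) I (y:ℂ) := by
        simpa using (((hasDerivAt_id ((y:ℂ))).mul_const I).const_add ((x:ℂ)))
      have := (D_hasDerivAt τ m ((x:ℂ)+(y:ℂ)*I)).comp (y:ℂ) hi
      simpa [Function.comp_def] using this
    exact h0.comp_ofReal
  have hDn : HasDerivAt (fun t : ℝ => D τ n ((x:ℂ) - (t:ℂ)*I))
      ((n:ℂ) * D τ (n-1) ((x:ℂ)-(y:ℂ)*I) * -I) y := by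
    have h0 : HasDerivAt (fun w : ℂ => D τ n ((x:ℂ) - w*I))
        ((n:ℂ) * D τ (n-1) ((x:ℂ)-(y:ℂ)*I) * -I) ((y:ℂ)) := by
      have hi : HasDerivAt (fun w : ℂ => (x:ℂ) - w*I) (-I) (y:ℂ) := by
        simpa using (((hasDerivAt_id ((y:ℂ))).mul_const I).const_sub ((x:ℂ)))
      have := (D_hasDerivAt τ n ((x:ℂ)-(y:ℂ)*I)).comp (y:ℂ) hi
      simpa [Function.comp_def] using this
    exact h0.comp_ofReal
  have hprod := (((hgc.const_mul ((Real.exp (-x^2/(1+τ)) : ℂ))).mul hDm).mul hDn).const_mul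
    (1-(τ:ℂ))
  convert hprod using 1
  · rfl
  all_goals first
  | (funext t; simp only [Fz, Pi.mul_apply])
  | (simp only [H2, Fz, Pi.mul_apply]; push_cast; field_simp [h1c]; ring)

lemma intH1_zero {τ : ℝ} (hτ0 : -1 < τ) (hτ1 : τ < 1) (m n : ℕ) :
    ∫ p : ℝ × ℝ, H1 τ m n p = 0 := by
  have hH1 : Integrable (H1 τ m n) := integrable_H1 hτ0 hτ1 m n
  have hFc : Integrable (fun p : ℝ × ℝ => (1+(τ:ℂ)) * Fz τ m n p) :=
    (integrable_Fz hτ0 hτ1 m n).const_mul _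
  rw [Measure.volume_eq_prod] at hH1 hFc ⊢
  rw [integral_prod_symm _ hH1]
  have hae : ∀ᵐ y : ℝ, (∫ x : ℝ, H1 τ m n (x, y)) = 0 := by
    filter_upwards [hH1.prod_left_ae, hFc.prod_left_ae] with y h1 h2
    exact integral_eq_zero_of_hasDerivAt_of_integrable
      (fun x => hasDerivAt_Fz_x hτ0 m n y x) h1 h2
  exact integral_eq_zero_of_ae hae

lemma intH2_zero {τ : ℝ} (hτ0 : -1 < τ) (hτ1 : τ < 1) (m n : ℕ) :
    ∫ p : ℝ × ℝ, H2 τ m n p = 0 := by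
  have hH2 : Integrable (H2 τ m n) := integrable_H2 hτ0 hτ1 m n
  have hFc : Integrable (fun p : ℝ × ℝ => (1-(τ:ℂ)) * Fz τ m n p) :=
    (integrable_Fz hτ0 hτ1 m n).const_mul _
  rw [Measure.volume_eq_prod] at hH2 hFc ⊢
  rw [integral_prod _ hH2]
  have hae : ∀ᵐ x : ℝ, (∫ y : ℝ, H2 τ m n (x, y)) = 0 := by
    filter_upwards [hH2.prod_right_ae, hFc.prod_right_ae] with x h1 h2
    exact integral_eq_zero_of_hasDerivAt_of_integrable
      (fun y => hasDerivAt_Fz_y hτ1 m n x y) h1 h2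
  exact integral_eq_zero_of_ae hae

lemma P1_pointwise {τ : ℝ} (m n : ℕ) (p : ℝ × ℝ) :
    (1-(τ:ℂ))*H1 τ m n p + I*((1+(τ:ℂ))*H2 τ m n p)
      = -2*Fz τ (m+1) n p - 2*(m:ℂ)*(τ:ℂ)*Fz τ (m-1) n p
        + 2*(τ:ℂ)*Fz τ m (n+1) p + 2*(n:ℂ)*Fz τ m (n-1) p := by
  have h1 := D_rec τ m ((p.1:ℂ)+(p.2:ℂ)*I)
  have h2 := D_rec τ n ((p.1:ℂ)-(p.2:ℂ)*I)
  simp only [H1, H2, Fz]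
  linear_combination
    (-2*((Real.exp (-p.1^2/(1+τ)):ℂ)*(Real.exp (-p.2^2/(1-τ)):ℂ))*D τ n ((p.1:ℂ)-(p.2:ℂ)*I)) * h1
    + (2*(τ:ℂ)*((Real.exp (-p.1^2/(1+τ)):ℂ)*(Real.exp (-p.2^2/(1-τ)):ℂ))*D τ m ((p.1:ℂ)+(p.2:ℂ)*I)) * h2
    + ((1-(τ:ℂ)^2)*((m:ℂ)*((Real.exp (-p.1^2/(1+τ)):ℂ)*(Real.exp (-p.2^2/(1-τ)):ℂ))
          *D τ (m-1) ((p.1:ℂ)+(p.2:ℂ)*I)*D τ n ((p.1:ℂ)-(p.2:ℂ)*I)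
        - (n:ℂ)*((Real.exp (-p.1^2/(1+τ)):ℂ)*(Real.exp (-p.2^2/(1-τ)):ℂ))
          *D τ m ((p.1:ℂ)+(p.2:ℂ)*I)*D τ (n-1) ((p.1:ℂ)-(p.2:ℂ)*I))) * Complex.I_sq

lemma P2_pointwise {τ : ℝ} (m n : ℕ) (p : ℝ × ℝ) :
    (1-(τ:ℂ))*H1 τ m n p - I*((1+(τ:ℂ))*H2 τ m n p)
      = -2*Fz τ m (n+1) p - 2*(n:ℂ)*(τ:ℂ)*Fz τ m (n-1) p
        + 2*(τ:ℂ)*Fz τ (m+1) n p + 2*(m:ℂ)*Fz τ (m-1) n p := by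
  have h1 := D_rec τ m ((p.1:ℂ)+(p.2:ℂ)*I)
  have h2 := D_rec τ n ((p.1:ℂ)-(p.2:ℂ)*I)
  simp only [H1, H2, Fz]
  linear_combination
    (2*(τ:ℂ)*((Real.exp (-p.1^2/(1+τ)):ℂ)*(Real.exp (-p.2^2/(1-τ)):ℂ))*D τ n ((p.1:ℂ)-(p.2:ℂ)*I)) * h1
    + (-2*((Real.exp (-p.1^2/(1+τ)):ℂ)*(Real.exp (-p.2^2/(1-τ)):ℂ))*D τ m ((p.1:ℂ)+(p.2:ℂ)*I)) * h2
    + ((1-(τ:ℂ)^2)*((n:ℂ)*((Real.exp (-p.1^2/(1+τ)):ℂ)*(Real.exp (-p.2^2/(1-τ)):ℂ))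
          *D τ m ((p.1:ℂ)+(p.2:ℂ)*I)*D τ (n-1) ((p.1:ℂ)-(p.2:ℂ)*I)
        - (m:ℂ)*((Real.exp (-p.1^2/(1+τ)):ℂ)*(Real.exp (-p.2^2/(1-τ)):ℂ))
          *D τ (m-1) ((p.1:ℂ)+(p.2:ℂ)*I)*D τ n ((p.1:ℂ)-(p.2:ℂ)*I))) * Complex.I_sq

lemma RE1 {τ : ℝ} (hτ0 : -1 < τ) (hτ1 : τ < 1) (m n : ℕ) :
    -2*J τ (m+1) n - 2*(m:ℂ)*(τ:ℂ)*J τ (m-1) n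
      + 2*(τ:ℂ)*J τ m (n+1) + 2*(n:ℂ)*J τ m (n-1) = 0 := by
  have hf1 := integrable_Fz hτ0 hτ1 (m+1) n
  have hf2 := integrable_Fz hτ0 hτ1 (m-1) n
  have hf3 := integrable_Fz hτ0 hτ1 m (n+1)
  have hf4 := integrable_Fz hτ0 hτ1 m (n-1)
  have hL : ∫ p : ℝ × ℝ, ((1-(τ:ℂ))*H1 τ m n p + I*((1+(τ:ℂ))*H2 τ m n p)) = 0 := by
    rw [integral_add ((integrable_H1 hτ0 hτ1 m n).const_mul _)
      (((integrable_H2 hτ0 hτ1 m n).const_mul _).const_mul I),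
      integral_const_mul, integral_const_mul, integral_const_mul,
      intH1_zero hτ0 hτ1 m n, intH2_zero hτ0 hτ1 m n]
    ring
  have hE : ∫ p : ℝ × ℝ, ((1-(τ:ℂ))*H1 τ m n p + I*((1+(τ:ℂ))*H2 τ m n p))
      = ∫ p : ℝ × ℝ, (-2*Fz τ (m+1) n p - 2*(m:ℂ)*(τ:ℂ)*Fz τ (m-1) n p
        + 2*(τ:ℂ)*Fz τ m (n+1) p + 2*(n:ℂ)*Fz τ m (n-1) p) :=
    integral_congr_ae (Filter.Eventually.of_forall (P1_pointwise m n))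
  have hR : ∫ p : ℝ × ℝ, (-2*Fz τ (m+1) n p - 2*(m:ℂ)*(τ:ℂ)*Fz τ (m-1) n p
        + 2*(τ:ℂ)*Fz τ m (n+1) p + 2*(n:ℂ)*Fz τ m (n-1) p)
      = -2*J τ (m+1) n - 2*(m:ℂ)*(τ:ℂ)*J τ (m-1) n
        + 2*(τ:ℂ)*J τ m (n+1) + 2*(n:ℂ)*J τ m (n-1) := by
    simp only [J]
    have hA : Integrable (fun p : ℝ × ℝ => -2*Fz τ (m+1) n p - 2*(m:ℂ)*(τ:ℂ)*Fz τ (m-1) n p) :=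
      (hf1.const_mul _).sub (hf2.const_mul _)
    have hB : Integrable (fun p : ℝ × ℝ => -2*Fz τ (m+1) n p - 2*(m:ℂ)*(τ:ℂ)*Fz τ (m-1) n p
        + 2*(τ:ℂ)*Fz τ m (n+1) p) := hA.add (hf3.const_mul _)
    rw [integral_add hB (hf4.const_mul _), integral_add hA (hf3.const_mul _),
      integral_sub (hf1.const_mul _) (hf2.const_mul _),
      integral_const_mul, integral_const_mul, integral_const_mul, integral_const_mul]
  rw [← hR, ← hE, hL]

lemma RE2 {τ : ℝ} (hτ0 : -1 < τ) (hτ1 : τ < 1) (m n : ℕ) :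
    -2*J τ m (n+1) - 2*(n:ℂ)*(τ:ℂ)*J τ m (n-1)
      + 2*(τ:ℂ)*J τ (m+1) n + 2*(m:ℂ)*J τ (m-1) n = 0 := by
  have hf1 := integrable_Fz hτ0 hτ1 m (n+1)
  have hf2 := integrable_Fz hτ0 hτ1 m (n-1)
  have hf3 := integrable_Fz hτ0 hτ1 (m+1) n
  have hf4 := integrable_Fz hτ0 hτ1 (m-1) n
  have hL : ∫ p : ℝ × ℝ, ((1-(τ:ℂ))*H1 τ m n p - I*((1+(τ:ℂ))*H2 τ m n p)) = 0 := by
    rw [integral_sub ((integrable_H1 hτ0 hτ1 m n).const_mul _)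
      (((integrable_H2 hτ0 hτ1 m n).const_mul _).const_mul I),
      integral_const_mul, integral_const_mul, integral_const_mul,
      intH1_zero hτ0 hτ1 m n, intH2_zero hτ0 hτ1 m n]
    ring
  have hE : ∫ p : ℝ × ℝ, ((1-(τ:ℂ))*H1 τ m n p - I*((1+(τ:ℂ))*H2 τ m n p))
      = ∫ p : ℝ × ℝ, (-2*Fz τ m (n+1) p - 2*(n:ℂ)*(τ:ℂ)*Fz τ m (n-1) p
        + 2*(τ:ℂ)*Fz τ (m+1) n p + 2*(m:ℂ)*Fz τ (m-1) n p) :=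
    integral_congr_ae (Filter.Eventually.of_forall (P2_pointwise m n))
  have hR : ∫ p : ℝ × ℝ, (-2*Fz τ m (n+1) p - 2*(n:ℂ)*(τ:ℂ)*Fz τ m (n-1) p
        + 2*(τ:ℂ)*Fz τ (m+1) n p + 2*(m:ℂ)*Fz τ (m-1) n p)
      = -2*J τ m (n+1) - 2*(n:ℂ)*(τ:ℂ)*J τ m (n-1)
        + 2*(τ:ℂ)*J τ (m+1) n + 2*(m:ℂ)*J τ (m-1) n := by
    simp only [J]
    have hA : Integrable (fun p : ℝ × ℝ => -2*Fz τ m (n+1) p - 2*(n:ℂ)*(τ:ℂ)*Fz τ m (n-1) p) :=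
      (hf1.const_mul _).sub (hf2.const_mul _)
    have hB : Integrable (fun p : ℝ × ℝ => -2*Fz τ m (n+1) p - 2*(n:ℂ)*(τ:ℂ)*Fz τ m (n-1) p
        + 2*(τ:ℂ)*Fz τ (m+1) n p) := hA.add (hf3.const_mul _)
    rw [integral_add hB (hf4.const_mul _), integral_add hA (hf3.const_mul _),
      integral_sub (hf1.const_mul _) (hf2.const_mul _),
      integral_const_mul, integral_const_mul, integral_const_mul, integral_const_mul]
  rw [← hR, ← hE, hL]

lemma one_sub_sq_ne {τ : ℝ} (hτ0 : -1 < τ) (hτ1 : τ < 1) : (1:ℂ) - (τ:ℂ)^2 ≠ 0 := by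
  have h : (0:ℝ) < 1 - τ^2 := by nlinarith
  have := Complex.ofReal_ne_zero.mpr (ne_of_gt h)
  push_cast at this
  exact this

lemma J_rec1 {τ : ℝ} (hτ0 : -1 < τ) (hτ1 : τ < 1) (m n : ℕ) :
    J τ (m+1) n = (n:ℂ) * J τ m (n-1) := by
  have e1 := RE1 hτ0 hτ1 m n
  have e2 := RE2 hτ0 hτ1 m n
  have key : (-2*((1:ℂ)-(τ:ℂ)^2)) * (J τ (m+1) n - (n:ℂ)*J τ m (n-1)) = 0 := by
    linear_combination e1 + (τ:ℂ) * e2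
  have h2 : (-2*((1:ℂ)-(τ:ℂ)^2)) ≠ 0 :=
    mul_ne_zero (by norm_num) (one_sub_sq_ne hτ0 hτ1)
  exact sub_eq_zero.mp ((mul_eq_zero.mp key).resolve_left h2)

lemma J_rec2 {τ : ℝ} (hτ0 : -1 < τ) (hτ1 : τ < 1) (m n : ℕ) :
    J τ m (n+1) = (m:ℂ) * J τ (m-1) n := by
  have e1 := RE1 hτ0 hτ1 m n
  have e2 := RE2 hτ0 hτ1 m n
  have key : (-2*((1:ℂ)-(τ:ℂ)^2)) * (J τ m (n+1) - (m:ℂ)*J τ (m-1) n) = 0 := by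
    linear_combination e2 + (τ:ℂ) * e1
  have h2 : (-2*((1:ℂ)-(τ:ℂ)^2)) ≠ 0 :=
    mul_ne_zero (by norm_num) (one_sub_sq_ne hτ0 hτ1)
  exact sub_eq_zero.mp ((mul_eq_zero.mp key).resolve_left h2)

lemma J00 {τ : ℝ} (hτ0 : -1 < τ) (hτ1 : τ < 1) :
    J τ 0 0 = (Real.pi:ℂ) * (Real.sqrt (1 - τ^2) : ℝ) := by
  have h1p : (0:ℝ) < 1 + τ := by linarith
  have h2p : (0:ℝ) < 1 - τ := by linarith
  unfold J
  have heq : (fun p : ℝ × ℝ => Fz τ 0 0 p)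
      = fun p : ℝ × ℝ => ((Real.exp (-p.1^2/(1+τ)) * Real.exp (-p.2^2/(1-τ)) : ℝ) : ℂ) := by
    funext p; simp only [Fz, D_zero, mul_one]; push_cast; ring
  rw [heq]
  have hcast : ∫ p : ℝ × ℝ, ((Real.exp (-p.1^2/(1+τ)) * Real.exp (-p.2^2/(1-τ)) : ℝ) : ℂ)
      = ((∫ p : ℝ × ℝ, Real.exp (-p.1^2/(1+τ)) * Real.exp (-p.2^2/(1-τ)) : ℝ) : ℂ) := by
    exact integral_ofReal
  rw [hcast]
  have hprod : ∫ p : ℝ × ℝ, Real.exp (-p.1^2/(1+τ)) * Real.exp (-p.2^2/(1-τ))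
      = (∫ x : ℝ, Real.exp (-x^2/(1+τ))) * ∫ y : ℝ, Real.exp (-y^2/(1-τ)) := by
    rw [Measure.volume_eq_prod]
    exact integral_prod_mul (fun x => Real.exp (-x^2/(1+τ))) (fun y => Real.exp (-y^2/(1-τ)))
  have g1 : ∫ x : ℝ, Real.exp (-x^2/(1+τ)) = Real.sqrt (Real.pi * (1+τ)) := by
    have h : (fun x : ℝ => Real.exp (-x^2/(1+τ))) = fun x : ℝ => Real.exp (-(1/(1+τ))*x^2) := by
      funext x; congr 1; field_simp
    rw [h, integral_gaussian]
    congr 1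
    field_simp
  have g2 : ∫ y : ℝ, Real.exp (-y^2/(1-τ)) = Real.sqrt (Real.pi * (1-τ)) := by
    have h : (fun y : ℝ => Real.exp (-y^2/(1-τ))) = fun y : ℝ => Real.exp (-(1/(1-τ))*y^2) := by
      funext y; congr 1; field_simp
    rw [h, integral_gaussian]
    congr 1
    field_simp
  rw [hprod, g1, g2, ← Real.sqrt_mul (by positivity),
    show Real.pi * (1+τ) * (Real.pi * (1-τ)) = Real.pi^2 * (1-τ^2) by ring,
    Real.sqrt_mul (by positivity), Real.sqrt_sq Real.pi_pos.le]
  push_cast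
  ring

lemma J_eq {τ : ℝ} (hτ0 : -1 < τ) (hτ1 : τ < 1) (m : ℕ) : ∀ n : ℕ,
    J τ m n = if m = n then (Real.pi:ℂ) * (m.factorial : ℂ) * (Real.sqrt (1 - τ^2) : ℝ) else 0 := by
  induction m with
  | zero =>
    intro n
    cases n with
    | zero => simpa using J00 hτ0 hτ1
    | succ n =>
      rw [J_rec2 hτ0 hτ1 0 n]
      simp
  | succ m ih =>
    intro n
    cases n with
    | zero =>
      rw [J_rec1 hτ0 hτ1 m 0]
      simp
    | succ n =>
      rw [J_rec1 hτ0 hτ1 m (n+1)]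
      simp only [Nat.add_sub_cancel, ih n]
      by_cases h : m = n
      · subst h
        simp only [if_pos rfl]
        rw [Nat.factorial_succ]
        push_cast
        ring
      · simp [h, fun hh : m + 1 = n + 1 => h (Nat.succ_injective hh)]

lemma C_zero (τ : ℝ) (z : ℂ) : C τ 0 z = 1 := by
  rw [C_sum]
  simp [Ct]

lemma C_one (τ : ℝ) (z : ℂ) : C τ 1 z = z := by
  rw [C_sum]
  simp [Ct]

lemma C_eq_D (τ : ℝ) (n : ℕ) (z : ℂ) : C τ n z = D τ n z := by
  induction n using Nat.strong_induction_on with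
  | _ n ih =>
    match n with
    | 0 => rw [C_zero]; rfl
    | 1 => rw [C_one]; rfl
    | (n+2) => rw [C_succ_succ, D_two, ih (n+1) (by omega), ih n (by omega)]

/-- two-dimensional orthogonality of the scaled Hermite polynomials. -/
theorem C_planar_orthogonality (τ : ℝ) (hτ0 : -1 < τ) (hτ1 : τ < 1) (m n : ℕ) :
    (∫ p : ℝ × ℝ, (Real.exp (-p.1 ^ 2 / (1 + τ)) * Real.exp (-p.2 ^ 2 / (1 - τ)) : ℂ) *
        C τ m ((p.1 : ℂ) + (p.2 : ℂ) * I) * C τ n ((p.1 : ℂ) - (p.2 : ℂ) * I)) =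
      if m = n then ((Real.pi : ℂ) * (m.factorial : ℂ) * (Real.sqrt (1 - τ ^ 2) : ℂ)) else 0 := by
  have hFC : (fun p : ℝ × ℝ => (Real.exp (-p.1 ^ 2 / (1 + τ)) * Real.exp (-p.2 ^ 2 / (1 - τ)) : ℂ) *
        C τ m ((p.1 : ℂ) + (p.2 : ℂ) * I) * C τ n ((p.1 : ℂ) - (p.2 : ℂ) * I)) = Fz τ m n := by
    funext p
    rw [C_eq_D, C_eq_D]
    simp only [Fz]
  rw [hFC]
  exact J_eq hτ0 hτ1 m n
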